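/- Suppose d is a positive integer with r = ord₂(d) ≥ 2, and x, y, n are integers with n ≥ 2 satisfying (x+1)² + ... + (x+d)² = yⁿ. Then n divides r − 1. -/

import Mathlib

lemma sum_sq_aux (d : ℕ) (x : ℤ) :
    12 * ∑ i ∈ Finset.range d, (x + (i:ℤ) + 1)^2
      = (d:ℤ) * (3*(2*x+d+1)^2 + (d:ℤ)^2 - 1) := by
  induction d with
  | zero => simp
  | succ k ih => rw [Finset.sum_range_succ, mul_add, ih]; push_cast; ring

theorem exponent_divides_of_two_adic_valuation (d : ℕ) (hd : 0 < d)
    (hr : 2 ≤ padicValNat 2 d) (n : ℕ) (hn : 2 ≤ n) (x y : ℤ)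
    (h : ∑ i ∈ Finset.range d, (x + (i : ℤ) + 1) ^ 2 = y ^ n) :
    n ∣ padicValNat 2 d - 1 := by
  set r := padicValNat 2 d with hrdef
  set S : ℤ := ∑ i ∈ Finset.range d, (x + (i:ℤ) + 1)^2 with hS
  -- d = 2^r * m with m odd
  have hfact : d.factorization 2 = r := Nat.factorization_def d Nat.prime_two
  set m : ℕ := d / 2 ^ (d.factorization 2) with hm
  have hdm : 2 ^ r * m = d := by rw [hm, hfact]; exact Nat.ordProj_mul_ordCompl_eq_self d 2
  have hmodd : ¬ 2 ∣ m := Nat.not_dvd_ordCompl Nat.prime_two hd.ne'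
  obtain ⟨r', hr'⟩ : ∃ r', r = r' + 1 := ⟨r - 1, by omega⟩
  have hr'1 : 1 ≤ r' := by omega
  -- d = 4 * c in ℤ
  obtain ⟨c, hc⟩ : (4:ℤ) ∣ (d:ℤ) := by
    have : (2:ℕ)^2 ∣ d := dvd_trans (pow_dvd_pow 2 hr) ⟨m, hdm.symm⟩
    exact_mod_cast Int.natCast_dvd_natCast.mpr this
  have hMeq : (d:ℤ) = 2 ^ (r'+1) * (m:ℤ) := by
    rw [← hr']; exact_mod_cast hdm.symm
  -- t = 2x+d+1 is odd: t = 2*(x+2c)+1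
  set k : ℤ := x + 2*c with hk
  set B : ℤ := 6*k^2 + 6*k + 1 + 8*c^2 with hB
  have hBodd : Odd B := ⟨3*k^2 + 3*k + 4*c^2, by rw [hB]; ring⟩
  have h12 : 12 * S = (d:ℤ) * (2 * B) := by
    rw [sum_sq_aux d x, hB, hk, hc]; ring
  have h3S : 3 * S = 2 ^ r' * ((m:ℤ) * B) := by
    have h4 : (4:ℤ) * (3 * S) = 4 * (2 ^ r' * ((m:ℤ) * B)) := by
      have : (4:ℤ) * (3 * S) = 12 * S := by ring
      rw [this, h12, hMeq, pow_succ]; ring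
    exact mul_left_cancel₀ (by norm_num) h4
  have hModd : Odd ((m:ℤ)) := by
    rw [Int.odd_coe_nat]; exact Nat.odd_iff.mpr (by omega : m % 2 = 1)
  have hMBodd : Odd ((m:ℤ) * B) := hModd.mul hBodd
  have hMBne : (m:ℤ) * B ≠ 0 := by
    intro h0; rw [h0] at hMBodd; exact (Int.not_odd_iff_even.mpr Even.zero) hMBodd
  have hSne : S ≠ 0 := by
    intro h0
    apply mul_ne_zero (pow_ne_zero r' (by norm_num : (2:ℤ) ≠ 0)) hMBne
    rw [← h3S, h0, mul_zero]
  -- pass to natAbs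
  have hMBnatodd : ¬ 2 ∣ ((m:ℤ) * B).natAbs := by
    have := Int.natAbs_odd.mpr hMBodd
    rw [Nat.odd_iff] at this; omega
  have hval3S : padicValNat 2 ((3 * S).natAbs) = r' := by
    have : (3 * S).natAbs = 2 ^ r' * ((m:ℤ) * B).natAbs := by
      rw [h3S, Int.natAbs_mul, Int.natAbs_pow]; rfl
    rw [this, padicValNat.mul (pow_ne_zero r' two_ne_zero)
        (Int.natAbs_ne_zero.mpr hMBne), padicValNat.prime_pow,
        padicValNat.eq_zero_of_not_dvd hMBnatodd, add_zero]
  have hvalS : padicValNat 2 S.natAbs = r' := by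
    have h3 : (3 * S).natAbs = 3 * S.natAbs := by rw [Int.natAbs_mul]; rfl
    rw [h3, padicValNat.mul (by norm_num) (Int.natAbs_ne_zero.mpr hSne),
        padicValNat.eq_zero_of_not_dvd (by norm_num), zero_add] at hval3S
    exact hval3S
  -- S = y^n
  have hyne : y.natAbs ≠ 0 := by
    intro h0
    apply hSne
    rw [h, Int.natAbs_eq_zero.mp h0]
    exact zero_pow (by omega)
  have hfin : padicValNat 2 S.natAbs = n * padicValNat 2 y.natAbs := by
    rw [h, Int.natAbs_pow, padicValNat.pow y.natAbs n]
  rw [hvalS] at hfin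
  exact ⟨padicValNat 2 y.natAbs, by omega⟩
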